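/- Let α ∈ (0,1) and T > 0. There exists a constant C = C(α,T) > 0 such that for every positive integer N with δ = T/N ≤ 1 and every s ∈ (0,T] that is not a grid point (s ≠ t_s), one has ∫_0^{t_s} (s−u)^{−α−1} ( ∫_u^{t_s} ( ∫_u^{t_v} (v−z)^{−α−1} dz ) dv ) du ≤ C δ^{−α}, where the innermost integral is taken to be 0 when t_v ≤ u. -/

import Mathlib

open MeasureTheory Set Real intervalIntegral

/-- The largest grid point `δ⌊u/δ⌋` of the uniform partition with mesh `δ` not exceeding `u`. -/
noncomputable def tgrid (δ u : ℝ) : ℝ := δ * (⌊u / δ⌋ : ℤ)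

section aux

variable {α δ : ℝ}

lemma tgrid_le (hδ : 0 < δ) (u : ℝ) : tgrid δ u ≤ u := by
  have h := Int.floor_le (u / δ)
  have h2 : δ * (u / δ) = u := by field_simp
  have := mul_le_mul_of_nonneg_left h hδ.le
  unfold tgrid; linarith

lemma lt_tgrid_add (hδ : 0 < δ) (u : ℝ) : u < tgrid δ u + δ := by
  have h := Int.lt_floor_add_one (u / δ)
  have h2 : δ * (u / δ) = u := by field_simp
  have := mul_lt_mul_of_pos_left h hδ
  unfold tgrid; nlinarith

lemma tgrid_eq (hδ : 0 < δ) {k : ℤ} {v : ℝ} (h1 : δ * k < v) (h2 : v < δ * (k + 1)) :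
    tgrid δ v = δ * k := by
  have hfl : ⌊v / δ⌋ = k := by
    rw [Int.floor_eq_iff]
    constructor
    · rw [le_div_iff₀ hδ]; nlinarith
    · rw [div_lt_iff₀ hδ]; push_cast at h2 ⊢; nlinarith
  unfold tgrid; rw [hfl]

lemma tgrid_le_of_lt (hδ : 0 < δ) {m : ℤ} {v : ℝ} (h : v < δ * m) :
    tgrid δ v ≤ δ * m - δ := by
  have hfl : ⌊v / δ⌋ < m := Int.floor_lt.mpr (by rw [div_lt_iff₀ hδ]; nlinarith)
  have hfl' : (⌊v / δ⌋ : ℝ) ≤ (m : ℝ) - 1 := by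
    have : (⌊v / δ⌋ : ℤ) ≤ m - 1 := by omega
    exact_mod_cast this
  have := mul_le_mul_of_nonneg_left hfl' hδ.le
  unfold tgrid; nlinarith

lemma grid_null (δ : ℝ) : ∀ᵐ v : ℝ, tgrid δ v ≠ v := by
  have hsub : {v : ℝ | tgrid δ v = v} ⊆ Set.range (fun k : ℤ => δ * k) := by
    intro v hv; exact ⟨⌊v / δ⌋, hv⟩
  have hnull : volume {v : ℝ | tgrid δ v = v} = 0 :=
    measure_mono_null hsub ((Set.countable_range _).measure_zero _)
  rw [MeasureTheory.ae_iff]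
  simpa [not_not] using hnull

/-- One cell: integrability and value bound of `(v - t_v)^(-α)` on `(δk, δ(k+1)]`. -/
lemma cell (hα0 : 0 < α) (hα1 : α < 1) (hδ : 0 < δ) (k : ℤ) :
    IntegrableOn (fun v => (v - tgrid δ v) ^ (-α)) (Ioc (δ * k) (δ * (k + 1))) ∧
    (∫ v in Ioc (δ * k) (δ * (k + 1)), (v - tgrid δ v) ^ (-α)) ≤ δ ^ (1 - α) / (1 - α) := by
  have hlt : δ * k < δ * (k + 1) := by push_cast; nlinarith
  have hend : δ * ((k : ℝ) + 1) = δ * k + δ := by ring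
  have hae : (fun v => (v - tgrid δ v) ^ (-α))
      =ᵐ[volume.restrict (Ioc (δ * k) (δ * (k + 1)))] (fun v => (v - δ * k) ^ (-α)) := by
    have h1 : ∀ᵐ v : ℝ, v ≠ δ * (k + 1) := by
      rw [MeasureTheory.ae_iff]; simpa [not_not] using measure_singleton (δ * ((k : ℝ) + 1))
    filter_upwards [MeasureTheory.ae_restrict_mem measurableSet_Ioc,
      MeasureTheory.ae_mono Measure.restrict_le_self h1] with v hv hne
    rw [tgrid_eq hδ hv.1 (by push_cast; exact lt_of_le_of_ne hv.2 (by push_cast at hne; exact hne))]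
  have hint' : IntegrableOn (fun v => (v - δ * k) ^ (-α)) (Ioc (δ * k) (δ * (k + 1))) := by
    have h0 : IntervalIntegrable (fun x : ℝ => x ^ (-α)) volume 0 δ :=
      intervalIntegrable_rpow' (by linarith)
    have h2 := h0.comp_sub_right (δ * k)
    rw [zero_add] at h2
    have h3 : IntervalIntegrable (fun x : ℝ => (x - δ * k) ^ (-α)) volume (δ * k) (δ * (k + 1)) := by
      rw [hend, add_comm (δ * (k : ℝ)) δ]; exact h2
    exact h3.1
  have hintval : (∫ v in Ioc (δ * k) (δ * (k + 1)), (v - δ * k) ^ (-α)) = δ ^ (1 - α) / (1 - α) := by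
    rw [← integral_of_le hlt.le]
    have := integral_comp_sub_right (a := δ * k) (b := δ * (k + 1))
      (fun x : ℝ => x ^ (-α)) (δ * k)
    rw [this]
    have e1 : δ * k - δ * k = 0 := by ring
    have e2 : δ * ((k : ℝ) + 1) - δ * k = δ := by ring
    rw [e1, e2, integral_rpow (Or.inl (by linarith))]
    rw [Real.zero_rpow (by linarith : -α + 1 ≠ 0)]
    rw [show -α + 1 = 1 - α by ring, sub_zero]
  constructor
  · exact hint'.congr_fun_ae hae.symm
  · rw [MeasureTheory.integral_congr_ae hae, hintval]

/-- Many cells. -/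
lemma cells (hα0 : 0 < α) (hα1 : α < 1) (hδ : 0 < δ) :
    ∀ n : ℕ, ∀ k : ℤ,
    IntegrableOn (fun v => (v - tgrid δ v) ^ (-α)) (Ioc (δ * k) (δ * (k + n))) ∧
    (∫ v in Ioc (δ * k) (δ * (k + n)), (v - tgrid δ v) ^ (-α)) ≤ n * (δ ^ (1 - α) / (1 - α)) := by
  intro n
  induction n with
  | zero =>
    intro k
    simp
  | succ n ih =>
    intro k
    obtain ⟨ih1, ih2⟩ := ih (k + 1)
    obtain ⟨c1, c2⟩ := cell hα0 hα1 hδ k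
    push_cast at ih1 ih2
    have he : δ * ((k : ℝ) + 1 + n) = δ * (k + (n + 1 : ℕ)) := by push_cast; ring
    rw [he] at ih1 ih2
    have hle1 : δ * (k : ℝ) ≤ δ * ((k : ℝ) + 1) := by nlinarith
    have hle2 : δ * ((k : ℝ) + 1) ≤ δ * ((k : ℝ) + (n + 1 : ℕ)) := by
      have : (0:ℝ) ≤ n := Nat.cast_nonneg n
      push_cast; nlinarith
    have hsplit : Ioc (δ * (k:ℝ)) (δ * (k + (n + 1 : ℕ))) =
        Ioc (δ * (k:ℝ)) (δ * (k + 1)) ∪ Ioc (δ * ((k:ℝ) + 1)) (δ * (k + (n + 1 : ℕ))) :=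
      (Ioc_union_Ioc_eq_Ioc hle1 hle2).symm
    have hdisj : Disjoint (Ioc (δ * (k:ℝ)) (δ * (k + 1)))
        (Ioc (δ * ((k:ℝ) + 1)) (δ * (k + (n + 1 : ℕ)))) := Ioc_disjoint_Ioc_of_le le_rfl
    have hint : IntegrableOn (fun v => (v - tgrid δ v) ^ (-α))
        (Ioc (δ * (k:ℝ)) (δ * (k + (n + 1 : ℕ)))) := by
      rw [hsplit]; exact c1.union ih1
    refine ⟨hint, ?_⟩
    rw [hsplit, MeasureTheory.setIntegral_union hdisj measurableSet_Ioc c1 ih1]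
    push_cast
    push_cast at ih2
    nlinarith [ih2, c2]

/-- If `u` is within `δ` of the right endpoint grid point `δ*m`, the middle integral vanishes. -/
lemma Hzero (hδ : 0 < δ) (m : ℤ) {u : ℝ} (hu : δ * m - δ ≤ u) (hα1 : α < 1) :
    (∫ v in Ioc u (δ * m),
      (if tgrid δ v ≤ u then (0:ℝ) else ∫ z in u..tgrid δ v, (v - z) ^ (-α - 1))) = 0 := by
  have hz : ∀ᵐ v ∂(volume.restrict (Ioc u (δ * m))),
      (if tgrid δ v ≤ u then (0:ℝ) else ∫ z in u..tgrid δ v, (v - z) ^ (-α - 1)) = 0 := by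
    have h1 : ∀ᵐ v : ℝ, v ≠ δ * m := by
      rw [MeasureTheory.ae_iff]; simpa [not_not] using measure_singleton (δ * (m:ℝ))
    filter_upwards [MeasureTheory.ae_restrict_mem measurableSet_Ioc,
      MeasureTheory.ae_mono Measure.restrict_le_self h1] with v hv hne
    have : tgrid δ v ≤ u := le_trans (tgrid_le_of_lt hδ (lt_of_le_of_ne hv.2 hne)) hu
    rw [if_pos this]
  exact MeasureTheory.integral_eq_zero_of_ae hz

/-- The key bound on the middle integral for `u` at distance at least `δ` from `δ*m`. -/
lemma Hle (hα0 : 0 < α) (hα1 : α < 1) (hδ : 0 < δ) (m : ℤ) {u : ℝ}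
    (hu0 : 0 < u) (hule : u ≤ δ * m - δ) :
    (∫ v in Ioc u (δ * m),
      (if tgrid δ v ≤ u then (0:ℝ) else ∫ z in u..tgrid δ v, (v - z) ^ (-α - 1)))
      ≤ 2 / (α * (1 - α)) * (δ * m - u) * δ ^ (-α) := by
  set g : ℝ → ℝ := fun v =>
    (if tgrid δ v ≤ u then (0:ℝ) else ∫ z in u..tgrid δ v, (v - z) ^ (-α - 1)) with hg
  set h : ℝ → ℝ := fun v => α⁻¹ * (v - tgrid δ v) ^ (-α) with hh
  -- the covering cells
  set k : ℤ := ⌊u / δ⌋ with hk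
  have hku : δ * k ≤ u := tgrid_le hδ u
  have huk : u < δ * k + δ := lt_tgrid_add hδ u
  have hkm : k < m := by
    have : (k:ℝ) < (m:ℝ) := by
      have : δ * k < δ * m := by linarith
      nlinarith
    exact_mod_cast this
  set n : ℕ := (m - k).toNat with hn
  have hnk : (n : ℤ) = m - k := Int.toNat_of_nonneg (by omega)
  have hend : δ * ((k:ℝ) + n) = δ * m := by
    have : (k:ℝ) + (n:ℝ) = (m:ℝ) := by
      have : ((k + n : ℤ) : ℝ) = ((m:ℤ) : ℝ) := by rw [show k + (n:ℤ) = m by omega]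
      push_cast at this; linarith
    rw [this]
  obtain ⟨hint0, hval0⟩ := cells hα0 hα1 hδ n k
  rw [hend] at hint0 hval0
  have hsub : Ioc u (δ * m) ⊆ Ioc (δ * k) (δ * m) := Ioc_subset_Ioc_left hku
  have hint : IntegrableOn (fun v => (v - tgrid δ v) ^ (-α)) (Ioc u (δ * m)) :=
    hint0.mono_set hsub
  have hnonneg0 : 0 ≤ᵐ[volume.restrict (Ioc (δ * k) (δ * m))]
      (fun v => (v - tgrid δ v) ^ (-α)) := by
    filter_upwards with v using Real.rpow_nonneg (by linarith [tgrid_le hδ v]) _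
  -- step 1 : ∫ g ≤ ∫ h
  have step1 : (∫ v in Ioc u (δ * m), g v) ≤ ∫ v in Ioc u (δ * m), h v := by
    apply MeasureTheory.integral_mono_of_nonneg
    · filter_upwards [MeasureTheory.ae_restrict_mem measurableSet_Ioc] with v hv
      rw [hg]
      dsimp only
      split_ifs with hcase
      · exact le_refl 0
      · refine intervalIntegral.integral_nonneg (le_of_lt (not_le.mp hcase)) ?_
        intro z hz
        have : z ≤ v := le_trans hz.2 (tgrid_le hδ v)
        exact Real.rpow_nonneg (by linarith) _
    · exact (hint.const_mul α⁻¹)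
    · -- g ≤ h a.e.
      filter_upwards [MeasureTheory.ae_restrict_mem measurableSet_Ioc,
        MeasureTheory.ae_mono Measure.restrict_le_self (grid_null δ)] with v hv hgrid
      rw [hg, hh]
      dsimp only
      have htv_le : tgrid δ v ≤ v := tgrid_le hδ v
      have htv : tgrid δ v < v := lt_of_le_of_ne htv_le hgrid
      split_ifs with hcase
      · exact mul_nonneg (inv_nonneg.mpr hα0.le) (Real.rpow_nonneg (by linarith) _)
      · have huv : u < tgrid δ v := not_le.mp hcase
        have hvu : 0 < v - u := by linarith
        have hvt : 0 < v - tgrid δ v := by linarith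
        have hval : (∫ z in u..tgrid δ v, (v - z) ^ (-α - 1))
            = ((v - u) ^ (-α) - (v - tgrid δ v) ^ (-α)) / (-α) := by
          have hcomp := integral_comp_sub_left (a := u) (b := tgrid δ v)
            (fun x : ℝ => x ^ (-α - 1)) v
          rw [hcomp, integral_rpow (Or.inr ⟨by intro hc; rw [show -α-1 = -1 ↔ α = 0 from by constructor <;> intro <;> linarith] at hc; exact hα0.ne' hc,
            Set.notMem_uIcc_of_lt (by linarith) (by linarith)⟩)]
          rw [show -α - 1 + 1 = -α by ring]
        rw [hval]
        have h1 : (0:ℝ) ≤ (v - u) ^ (-α) := Real.rpow_nonneg hvu.le _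
        have h2 : ((v - u) ^ (-α) - (v - tgrid δ v) ^ (-α)) / (-α)
            = ((v - tgrid δ v) ^ (-α) - (v - u) ^ (-α)) / α := by
          rw [div_neg, ← neg_div, neg_sub]
        rw [h2]
        have h3 : ((v - tgrid δ v) ^ (-α) - (v - u) ^ (-α)) / α ≤ (v - tgrid δ v) ^ (-α) / α :=
          (div_le_div_iff_of_pos_right hα0).mpr (by linarith)
        calc ((v - tgrid δ v) ^ (-α) - (v - u) ^ (-α)) / α ≤ (v - tgrid δ v) ^ (-α) / α := h3
          _ = α⁻¹ * (v - tgrid δ v) ^ (-α) := by rw [inv_mul_eq_div]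
  -- step 2 : estimate ∫ h
  have hnδ : (n : ℝ) * δ = δ * m - δ * k := by
    have : (n : ℝ) = (m : ℝ) - (k : ℝ) := by exact_mod_cast hnk
    rw [this]; ring
  have hbound : (n : ℝ) * δ ≤ 2 * (δ * m - u) := by linarith
  have hrw : δ ^ (1 - α) = δ * δ ^ (-α) := by
    rw [show (1 : ℝ) - α = 1 + (-α) by ring, Real.rpow_add hδ, Real.rpow_one]
  have hδα : (0 : ℝ) ≤ δ ^ (-α) := Real.rpow_nonneg hδ.le _
  have step2 : (∫ v in Ioc u (δ * m), h v) ≤ 2 / (α * (1 - α)) * (δ * m - u) * δ ^ (-α) := by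
    have e1 : (∫ v in Ioc u (δ * m), h v)
        = α⁻¹ * ∫ v in Ioc u (δ * m), (v - tgrid δ v) ^ (-α) := by
      rw [hh]; exact MeasureTheory.integral_const_mul _ _
    rw [e1]
    have e2 : (∫ v in Ioc u (δ * m), (v - tgrid δ v) ^ (-α))
        ≤ ∫ v in Ioc (δ * k) (δ * m), (v - tgrid δ v) ^ (-α) :=
      MeasureTheory.setIntegral_mono_set hint0 hnonneg0 hsub.eventuallyLE
    have e3 : (n : ℝ) * (δ ^ (1 - α) / (1 - α)) ≤ 2 * (δ * m - u) * δ ^ (-α) / (1 - α) := by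
      rw [hrw, show (n:ℝ) * (δ * δ ^ (-α) / (1 - α)) = ((n:ℝ) * δ) * δ ^ (-α) / (1 - α) by ring]
      refine (div_le_div_iff_of_pos_right (by linarith)).mpr ?_
      nlinarith
    have e4 : α⁻¹ * (2 * (δ * m - u) * δ ^ (-α) / (1 - α))
        = 2 / (α * (1 - α)) * (δ * m - u) * δ ^ (-α) := by
      field_simp
    calc α⁻¹ * ∫ v in Ioc u (δ * m), (v - tgrid δ v) ^ (-α)
        ≤ α⁻¹ * ∫ v in Ioc (δ * k) (δ * m), (v - tgrid δ v) ^ (-α) :=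
          mul_le_mul_of_nonneg_left e2 (inv_nonneg.mpr hα0.le)
      _ ≤ α⁻¹ * ((n : ℝ) * (δ ^ (1 - α) / (1 - α))) :=
          mul_le_mul_of_nonneg_left hval0 (inv_nonneg.mpr hα0.le)
      _ ≤ α⁻¹ * (2 * (δ * m - u) * δ ^ (-α) / (1 - α)) :=
          mul_le_mul_of_nonneg_left e3 (inv_nonneg.mpr hα0.le)
      _ = 2 / (α * (1 - α)) * (δ * m - u) * δ ^ (-α) := e4
  exact le_trans step1 step2

end aux


/-- For `α ∈ (0,1)` there is `C = C(α,T)` such that for every partition with mesh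
`δ = T/N ≤ 1` and every non-grid point `s ∈ (0,T]`,
`∫_0^{t_s} (s−u)^{−α−1} ∫_u^{t_s} ∫_u^{t_v} (v−z)^{−α−1} dz dv du ≤ C δ^{−α}`,
the innermost integral being `0` when `t_v ≤ u`. -/
theorem stmt_8 (α T : ℝ) (hα0 : 0 < α) (hα1 : α < 1) (hT : 0 < T) :
    ∃ C : ℝ, 0 < C ∧ ∀ N : ℕ, 0 < N → T / N ≤ 1 →
      ∀ s ∈ Set.Ioc (0:ℝ) T, s ≠ tgrid (T / N) s →
        (∫ u in (0:ℝ)..tgrid (T / N) s, (s - u) ^ (-α - 1) *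
            ∫ v in u..tgrid (T / N) s,
              (if tgrid (T / N) v ≤ u then 0
               else ∫ z in u..tgrid (T / N) v, (v - z) ^ (-α - 1)))
          ≤ C * (T / N) ^ (-α) := by
  have h1α : 0 < 1 - α := by linarith
  refine ⟨2 * T ^ (1 - α) / (α * (1 - α) ^ 2), by positivity, ?_⟩
  intro N hN _ s hs hsne
  set δ : ℝ := T / N with hδdef
  have hδ : 0 < δ := div_pos hT (by exact_mod_cast hN)
  set m : ℤ := ⌊s / δ⌋ with hm
  have hts : tgrid δ s = δ * m := rfl
  have hts_le : tgrid δ s ≤ s := tgrid_le hδ s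
  have hts_lt : tgrid δ s < s := lt_of_le_of_ne hts_le (fun h => hsne h.symm)
  have hm0 : (0:ℤ) ≤ m := Int.floor_nonneg.mpr (div_nonneg (le_of_lt hs.1) hδ.le)
  have hts_nonneg : 0 ≤ tgrid δ s := by
    rw [hts]; exact mul_nonneg hδ.le (by exact_mod_cast hm0)
  set K : ℝ := 2 / (α * (1 - α)) * δ ^ (-α) with hK
  have hδα : (0:ℝ) ≤ δ ^ (-α) := Real.rpow_nonneg hδ.le _
  have hKpos : 0 ≤ K := mul_nonneg (div_nonneg (by norm_num) (by nlinarith)) hδα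
  set φ : ℝ → ℝ := fun u => K * (tgrid δ s - u) ^ (-α) with hφ
  have hφint : IntegrableOn φ (Ioc 0 (tgrid δ s)) := by
    have h0 : IntervalIntegrable (fun x : ℝ => x ^ (-α)) volume 0 (tgrid δ s) :=
      intervalIntegrable_rpow' (by linarith)
    have h2 := (h0.comp_sub_left (tgrid δ s)).symm
    have h3 : IntervalIntegrable (fun x : ℝ => (tgrid δ s - x) ^ (-α)) volume 0 (tgrid δ s) := by
      simpa using h2
    exact (h3.1).const_mul K
  have key : ∀ u ∈ Ioc (0:ℝ) (tgrid δ s),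
      (s - u) ^ (-α - 1) * (∫ v in u..tgrid δ s,
        (if tgrid δ v ≤ u then (0:ℝ) else ∫ z in u..tgrid δ v, (v - z) ^ (-α - 1))) ≤ φ u := by
    intro u hu
    have hu0 : 0 < u := hu.1
    have huts : u ≤ tgrid δ s := hu.2
    have hsu : 0 < s - u := by linarith
    have hsua : (0:ℝ) ≤ (s - u) ^ (-α - 1) := Real.rpow_nonneg hsu.le _
    rw [integral_of_le huts, hts]
    by_cases hcase : u ≤ δ * m - δ
    · have hH := Hle hα0 hα1 hδ m hu0 hcase
      have htsu : 0 < tgrid δ s - u := by rw [hts]; linarith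
      have hb1 : (s - u) ^ (-α - 1) * (tgrid δ s - u) ≤ (tgrid δ s - u) ^ (-α) := by
        have ha : (s - u) ^ (-α - 1) * (tgrid δ s - u) ≤ (s - u) ^ (-α - 1) * (s - u) :=
          mul_le_mul_of_nonneg_left (by linarith) hsua
        have hb : (s - u) ^ (-α - 1) * (s - u) = (s - u) ^ (-α) := by
          rw [← Real.rpow_add_one hsu.ne' (-α - 1), show -α - 1 + 1 = -α by ring]
        have hc : (s - u) ^ (-α) ≤ (tgrid δ s - u) ^ (-α) :=
          Real.rpow_le_rpow_of_nonpos htsu (by linarith) (by linarith)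
        calc (s - u) ^ (-α - 1) * (tgrid δ s - u) ≤ (s - u) ^ (-α - 1) * (s - u) := ha
          _ = (s - u) ^ (-α) := hb
          _ ≤ (tgrid δ s - u) ^ (-α) := hc
      calc (s - u) ^ (-α - 1) * (∫ v in Ioc u (δ * m),
            (if tgrid δ v ≤ u then (0:ℝ) else ∫ z in u..tgrid δ v, (v - z) ^ (-α - 1)))
          ≤ (s - u) ^ (-α - 1) * (2 / (α * (1 - α)) * (δ * m - u) * δ ^ (-α)) :=
            mul_le_mul_of_nonneg_left hH hsua
        _ = K * ((s - u) ^ (-α - 1) * (tgrid δ s - u)) := by rw [hK, hts]; ring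
        _ ≤ K * (tgrid δ s - u) ^ (-α) := mul_le_mul_of_nonneg_left hb1 hKpos
        _ = φ u := rfl
    · have hH := Hzero hδ m (le_of_lt (not_le.mp hcase)) hα1
      rw [hH, mul_zero, hφ]
      have : (0:ℝ) ≤ (tgrid δ s - u) ^ (-α) := Real.rpow_nonneg (by linarith) _
      exact mul_nonneg hKpos this
  rw [integral_of_le hts_nonneg]
  have mono : (∫ u in Ioc (0:ℝ) (tgrid δ s), (s - u) ^ (-α - 1) *
      (∫ v in u..tgrid δ s,
        (if tgrid δ v ≤ u then (0:ℝ) else ∫ z in u..tgrid δ v, (v - z) ^ (-α - 1))))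
      ≤ ∫ u in Ioc (0:ℝ) (tgrid δ s), φ u := by
    apply MeasureTheory.integral_mono_of_nonneg
    · filter_upwards [MeasureTheory.ae_restrict_mem measurableSet_Ioc] with u hu
      have huts : u ≤ tgrid δ s := hu.2
      have hsu : 0 < s - u := by linarith [hu.1]
      refine mul_nonneg (Real.rpow_nonneg hsu.le _) ?_
      refine intervalIntegral.integral_nonneg huts ?_
      intro v hv
      split_ifs with hc
      · exact le_refl 0
      · refine intervalIntegral.integral_nonneg (le_of_lt (not_le.mp hc)) ?_
        intro z hz
        have : z ≤ v := le_trans hz.2 (tgrid_le hδ v)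
        exact Real.rpow_nonneg (by linarith) _
    · exact hφint
    · filter_upwards [MeasureTheory.ae_restrict_mem measurableSet_Ioc] with u hu
      exact key u hu
  refine le_trans mono ?_
  have hval : (∫ u in Ioc (0:ℝ) (tgrid δ s), φ u)
      = K * (tgrid δ s ^ (1 - α) / (1 - α)) := by
    rw [hφ, MeasureTheory.integral_const_mul, ← integral_of_le hts_nonneg]
    congr 1
    have hcomp := integral_comp_sub_left (a := (0:ℝ)) (b := tgrid δ s)
      (fun x : ℝ => x ^ (-α)) (tgrid δ s)
    rw [hcomp, sub_self, sub_zero, integral_rpow (Or.inl (by linarith)),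
      Real.zero_rpow (by linarith : -α + 1 ≠ 0), show -α + 1 = 1 - α by ring, sub_zero]
  rw [hval]
  have hle2 : tgrid δ s ^ (1 - α) ≤ T ^ (1 - α) :=
    Real.rpow_le_rpow hts_nonneg (le_trans hts_le hs.2) h1α.le
  calc K * (tgrid δ s ^ (1 - α) / (1 - α)) ≤ K * (T ^ (1 - α) / (1 - α)) := by
        refine mul_le_mul_of_nonneg_left ?_ hKpos
        exact (div_le_div_iff_of_pos_right h1α).mpr hle2
    _ = 2 * T ^ (1 - α) / (α * (1 - α) ^ 2) * δ ^ (-α) := by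
        rw [hK]; field_simp
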